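/- Suppose monic matrix polynomials Q_n(x;t) satisfy x Q_{2n} = Q_{2n+1} + ξ_n Q_{2n-1}, x Q_{2n+1} = Q_{2n+2} + ζ_{n+1} Q_{2n}, together with ∂_t Q_{2n} = -ξ_n ζ_n Q_{2n-2} and ∂_t Q_{2n+1} = -ζ_{n+1} ξ_n Q_{2n-1}. Then the non-abelian Volterra lattice holds: ∂_t ξ_n = ζ_{n+1} ξ_n - ξ_n ζ_n and ∂_t ζ_{n+1} = ξ_{n+1} ζ_{n+1} - ζ_{n+1} ξ_n. -/

import Mathlib

open Polynomial

private lemma derivMulEntry {p : ℕ} {A B : ℝ → Matrix (Fin p) (Fin p) ℝ}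
    {A' B' : Matrix (Fin p) (Fin p) ℝ} {t : ℝ}
    (hA : ∀ i j, HasDerivAt (fun s => A s i j) (A' i j) t)
    (hB : ∀ i j, HasDerivAt (fun s => B s i j) (B' i j) t) (i j : Fin p) :
    HasDerivAt (fun s => (A s * B s) i j) ((A' * B t + A t * B') i j) t := by
  simp only [Matrix.mul_apply, Matrix.add_apply]
  have h := HasDerivAt.fun_sum (fun l (_ : l ∈ Finset.univ) => (hA i l).mul (hB l j))
  rwa [← Finset.sum_add_distrib]

/-- Compatibility of the reduced recurrences `x Q_{2n} = Q_{2n+1} + ξ_n Q_{2n-1}`,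
`x Q_{2n+1} = Q_{2n+2} + ζ_{n+1} Q_{2n}` with the time evolutions
`∂_t Q_{2n} = -ξ_n ζ_n Q_{2n-2}`, `∂_t Q_{2n+1} = -ζ_{n+1} ξ_n Q_{2n-1}` yields the
non-abelian Volterra lattice `∂_t ξ_n = ζ_{n+1} ξ_n - ξ_n ζ_n` and
`∂_t ζ_{n+1} = ξ_{n+1} ζ_{n+1} - ζ_{n+1} ξ_n`.  Polynomials are indexed by `ℤ` with
`Q_m := 0` for `m < 0` (so `Q_{-1} = Q_{-2} = 0`), monic of degree `m` for `m ≥ 0`,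
with the semi-infinite convention `ξ_0 = 0`; entrywise derivatives. -/
theorem stmt18 {p : ℕ}
    (Q : ℝ → ℤ → Polynomial (Matrix (Fin p) (Fin p) ℝ))
    (ξ ζ ξ' ζ' : ℕ → ℝ → Matrix (Fin p) (Fin p) ℝ)
    (hneg : ∀ t m, m < 0 → Q t m = 0)
    (hmonic : ∀ t (m : ℤ), 0 ≤ m → (Q t m).Monic ∧ ((Q t m).natDegree : ℤ) = m)
    (hξ0 : ∀ t, ξ 0 t = 0)
    (hrecEven : ∀ (n : ℕ) t,
      X * Q t (2 * (n : ℤ)) = Q t (2 * (n : ℤ) + 1) + C (ξ n t) * Q t (2 * (n : ℤ) - 1))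
    (hrecOdd : ∀ (n : ℕ) t,
      X * Q t (2 * (n : ℤ) + 1) = Q t (2 * (n : ℤ) + 2) + C (ζ (n + 1) t) * Q t (2 * (n : ℤ)))
    (hdξ : ∀ n t i j, HasDerivAt (fun s => ξ n s i j) (ξ' n t i j) t)
    (hdζ : ∀ n t i j, HasDerivAt (fun s => ζ n s i j) (ζ' n t i j) t)
    (hevolEven : ∀ (n : ℕ) t k i j,
      HasDerivAt (fun s => (Q s (2 * (n : ℤ))).coeff k i j)
        ((-(ξ n t * ζ n t) * (Q t (2 * (n : ℤ) - 2)).coeff k) i j) t)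
    (hevolOdd : ∀ (n : ℕ) t k i j,
      HasDerivAt (fun s => (Q s (2 * (n : ℤ) + 1)).coeff k i j)
        ((-(ζ (n + 1) t * ξ n t) * (Q t (2 * (n : ℤ) - 1)).coeff k) i j) t) :
    ∀ (n : ℕ) t,
      ξ' n t = ζ (n + 1) t * ξ n t - ξ n t * ζ n t ∧
      ζ' (n + 1) t = ξ (n + 1) t * ζ (n + 1) t - ζ (n + 1) t * ξ n t := by
  -- leading coefficient is 1
  have hlead : ∀ (mz : ℤ) (d : ℕ) t, mz = (d : ℤ) → (Q t mz).coeff d = 1 := by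
    intro mz d t h
    subst h
    obtain ⟨hm, hd⟩ := hmonic t d (Int.natCast_nonneg d)
    have hdeg : (Q t (d : ℤ)).natDegree = d := by exact_mod_cast hd
    have := hm.coeff_natDegree
    rwa [hdeg] at this
  -- coefficients above the degree vanish
  have habove : ∀ (mz : ℤ) (d j : ℕ) t, mz = (d : ℤ) → d < j → (Q t mz).coeff j = 0 := by
    intro mz d j t h hlt
    subst h
    obtain ⟨hm, hd⟩ := hmonic t d (Int.natCast_nonneg d)
    have hdeg : (Q t (d : ℤ)).natDegree = d := by exact_mod_cast hd
    exact Polynomial.coeff_eq_zero_of_natDegree_lt (by omega)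
  intro n t
  rcases n with _ | m
  · constructor
    · -- n = 0, even: ξ₀ ≡ 0
      have hz : ξ' 0 t = 0 := by
        ext i j
        have h := hdξ 0 t i j
        have h2 : HasDerivAt (fun s => ξ 0 s i j) ((0 : Matrix (Fin p) (Fin p) ℝ) i j) t := by
          have he : (fun s : ℝ => ξ 0 s i j) = fun _ => (0 : Matrix (Fin p) (Fin p) ℝ) i j :=
            funext fun s => by rw [hξ0 s]
          rw [he]
          exact hasDerivAt_const t _
        exact h.unique h2
      rw [hz, hξ0]
      simp
    · -- n = 0, odd: ζ'₁ = ξ₁ ζ₁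
      have e2 : (2 : ℤ) * ((0 + 1 : ℕ) : ℤ) = 2 * ((0 : ℕ) : ℤ) + 2 := by norm_num
      ext i j
      have c2 : (Q t (2 * ((0 + 1 : ℕ) : ℤ) - 2)).coeff 0 = 1 :=
        hlead _ 0 t (by push_cast; try ring)
      have h1 := hevolEven (0 + 1) t 0 i j
      rw [c2, mul_one] at h1
      have h1' := h1.neg
      -- ζ₁ s = -(Q s 2).coeff 0
      have hζfun : HasDerivAt (fun s => ζ (0 + 1) s i j)
          (-((-(ξ (0 + 1) t * ζ (0 + 1) t)) i j)) t := by
        refine h1'.congr_of_eventuallyEq (Filter.Eventually.of_forall fun s => ?_)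
        have h0 := congrArg (fun P => P.coeff 0) (hrecOdd 0 s)
        simp only [Polynomial.mul_coeff_zero, Polynomial.coeff_X_zero, zero_mul,
          Polynomial.coeff_add, Polynomial.coeff_C_mul, Polynomial.coeff_C_zero] at h0
        have c0 : (Q s (2 * ((0 : ℕ) : ℤ))).coeff 0 = 1 := hlead _ 0 s (by norm_num)
        rw [c0, mul_one] at h0
        have h0' := congrArg (fun M : Matrix (Fin p) (Fin p) ℝ => M i j) h0
        simp only [Matrix.add_apply, Matrix.zero_apply] at h0'
        show ζ (0 + 1) s i j = -((Q s (2 * ((0 + 1 : ℕ) : ℤ))).coeff 0 i j)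
        rw [e2]
        linarith
      have := (hdζ (0 + 1) t i j).unique hζfun
      rw [this, hξ0]
      simp [Matrix.sub_apply, Matrix.neg_apply]
  · have e1 : (2 : ℤ) * ((m + 1 : ℕ) : ℤ) - 1 = 2 * (m : ℤ) + 1 := by push_cast; ring
    constructor
    · -- even case, n = m + 1
      ext i j
      have c2 : (Q t (2 * ((m + 1 : ℕ) : ℤ) - 2)).coeff (2 * m) = 1 :=
        hlead _ (2 * m) t (by push_cast; try ring)
      have h1 := hevolEven (m + 1) t (2 * m) i j
      rw [c2, mul_one] at h1
      have c1 : (Q t (2 * ((m + 1 : ℕ) : ℤ) - 1)).coeff (2 * m + 1) = 1 :=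
        hlead _ (2 * m + 1) t (by push_cast; try ring)
      have h2 := hevolOdd (m + 1) t (2 * m + 1) i j
      rw [c1, mul_one] at h2
      have h3 := h1.sub h2
      -- derivative of the product ξ_{m+1} · coeff
      have hB : ∀ i j, HasDerivAt (fun s => (Q s (2 * (m : ℤ) + 1)).coeff (2 * m + 1) i j)
          ((0 : Matrix (Fin p) (Fin p) ℝ) i j) t := by
        intro i j
        have c3 : (Q t (2 * (m : ℤ) - 1)).coeff (2 * m + 1) = 0 := by
          rcases Nat.eq_zero_or_pos m with hm | hm
          · subst hm
            rw [show (2 * ((0 : ℕ) : ℤ) - 1) = (-1 : ℤ) by norm_num, hneg t (-1) (by norm_num)]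
            simp
          · exact habove _ (2 * m - 1) _ t (by push_cast [Nat.cast_sub (by omega : 1 ≤ 2 * m)]; ring) (by omega)
        have h := hevolOdd m t (2 * m + 1) i j
        rw [c3, mul_zero] at h
        simpa using h
      have cB : (Q t (2 * (m : ℤ) + 1)).coeff (2 * m + 1) = 1 :=
        hlead _ (2 * m + 1) t (by push_cast; try ring)
      have hprod := derivMulEntry (A := ξ (m + 1)) (B' := (0 : Matrix (Fin p) (Fin p) ℝ))
        (fun i j => hdξ (m + 1) t i j) hB i j
      rw [cB, mul_one, mul_zero, add_zero] at hprod
      -- the two functions agree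
      have h3' : HasDerivAt (fun s => (ξ (m + 1) s * (Q s (2 * (m : ℤ) + 1)).coeff (2 * m + 1)) i j)
          ((-(ξ (m + 1) t * ζ (m + 1) t)) i j - (-(ζ (m + 1 + 1) t * ξ (m + 1) t)) i j) t := by
        refine h3.congr_of_eventuallyEq (Filter.Eventually.of_forall fun s => ?_)
        have h0 := congrArg (fun P => P.coeff (2 * m + 1)) (hrecEven (m + 1) s)
        simp only [Polynomial.coeff_X_mul, Polynomial.coeff_add, Polynomial.coeff_C_mul] at h0
        rw [e1] at h0
        have h0' := congrArg (fun M : Matrix (Fin p) (Fin p) ℝ => M i j) h0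
        simp only [Matrix.add_apply] at h0'
        simp only [Pi.sub_apply]
        rw [h0']
        ring
      have hval := h3'.unique hprod
      rw [← hval]
      simp only [Matrix.sub_apply, Matrix.neg_apply]
      ring
    · -- odd case, n = m + 1
      ext i j
      have c1 : (Q t (2 * ((m + 1 : ℕ) : ℤ) - 1)).coeff (2 * m + 1) = 1 :=
        hlead _ (2 * m + 1) t (by push_cast; try ring)
      have h1 := hevolOdd (m + 1) t (2 * m + 1) i j
      rw [c1, mul_one] at h1
      have c2 : (Q t (2 * ((m + 1 + 1 : ℕ) : ℤ) - 2)).coeff (2 * m + 1 + 1) = 1 :=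
        hlead _ (2 * m + 2) t (by push_cast; try ring)
      have h2 := hevolEven (m + 1 + 1) t (2 * m + 1 + 1) i j
      rw [c2, mul_one] at h2
      have h3 := h1.sub h2
      have hB : ∀ i j, HasDerivAt
          (fun s => (Q s (2 * ((m + 1 : ℕ) : ℤ))).coeff (2 * m + 1 + 1) i j)
          ((0 : Matrix (Fin p) (Fin p) ℝ) i j) t := by
        intro i j
        have c3 : (Q t (2 * ((m + 1 : ℕ) : ℤ) - 2)).coeff (2 * m + 1 + 1) = 0 :=
          habove _ (2 * m) _ t (by push_cast; try ring) (by omega)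
        have h := hevolEven (m + 1) t (2 * m + 1 + 1) i j
        rw [c3, mul_zero] at h
        simpa using h
      have cB : (Q t (2 * ((m + 1 : ℕ) : ℤ))).coeff (2 * m + 1 + 1) = 1 :=
        hlead _ (2 * m + 2) t (by push_cast; try ring)
      have hprod := derivMulEntry (A := ζ (m + 1 + 1)) (B' := (0 : Matrix (Fin p) (Fin p) ℝ))
        (fun i j => hdζ (m + 1 + 1) t i j) hB i j
      rw [cB, mul_one, mul_zero, add_zero] at hprod
      have e3 : (2 : ℤ) * ((m + 1 + 1 : ℕ) : ℤ) = 2 * ((m + 1 : ℕ) : ℤ) + 2 := by push_cast; ring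
      have h3' : HasDerivAt
          (fun s => (ζ (m + 1 + 1) s * (Q s (2 * ((m + 1 : ℕ) : ℤ))).coeff (2 * m + 1 + 1)) i j)
          ((-(ζ (m + 1 + 1) t * ξ (m + 1) t)) i j - (-(ξ (m + 1 + 1) t * ζ (m + 1 + 1) t)) i j) t := by
        refine h3.congr_of_eventuallyEq (Filter.Eventually.of_forall fun s => ?_)
        have h0 := congrArg (fun P => P.coeff (2 * m + 1 + 1)) (hrecOdd (m + 1) s)
        simp only [Polynomial.coeff_X_mul, Polynomial.coeff_add, Polynomial.coeff_C_mul] at h0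
        have h0' := congrArg (fun M : Matrix (Fin p) (Fin p) ℝ => M i j) h0
        simp only [Matrix.add_apply] at h0'
        simp only [Pi.sub_apply]
        rw [e3, h0']
        ring
      have hval := h3'.unique hprod
      rw [← hval]
      simp only [Matrix.sub_apply, Matrix.neg_apply]
      ring
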